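/- If r ∈ ℂₚ with |r − 1| ≤ (1/3)^{1/3}, then the function g_r : ℤₚ → ℂₚ, x ↦ r^x = Σₙ (r−1)ⁿ C(x,n), is 1-Lipschitz; in particular, so is f_r = S⁻¹(g_r). -/

import Mathlib

open Filter Finset

/-- The canonical embedding `ℤ_[p] → K` (where `K` plays the role of `ℂ_p`,
a complete nontrivially normed field extension of `ℚ_[p]`). -/
noncomputable def pc (p : ℕ) [Fact p.Prime] (K : Type*) [NontriviallyNormedField K]
    [NormedAlgebra ℚ_[p] K] (x : ℤ_[p]) : K :=
  algebraMap ℚ_[p] K x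

/-- The operator `S` : `S(f)(x) = f(x) - x·f(x-1)`. -/
noncomputable def Sop (p : ℕ) [Fact p.Prime] (K : Type*) [NontriviallyNormedField K]
    [NormedAlgebra ℚ_[p] K] (f : ℤ_[p] → K) : ℤ_[p] → K :=
  fun x => f x - pc p K x * f (x - 1)

/-- The Mahler basis function `βₙ(x) = C(x,n) = x(x-1)⋯(x-n+1)/n!`, valued in `K`. -/
noncomputable def bK (p : ℕ) [Fact p.Prime] (K : Type*) [NontriviallyNormedField K]
    [NormedAlgebra ℚ_[p] K] (n : ℕ) (x : ℤ_[p]) : K :=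
  (∏ i ∈ Finset.range n, (pc p K x - (i : K))) / (n.factorial : K)

noncomputable def eK (p : ℕ) [Fact p.Prime] (K : Type*) [NontriviallyNormedField K]
    [NormedAlgebra ℚ_[p] K] : ℤ_[p] →+* K :=
  (algebraMap ℚ_[p] K).comp (PadicInt.Coe.ringHom)

lemma aux_ultraK (p : ℕ) [Fact p.Prime] (K : Type*) [NontriviallyNormedField K]
    [NormedAlgebra ℚ_[p] K] : IsUltrametricDist K := by
  apply IsUltrametricDist.isUltrametricDist_of_forall_norm_natCast_le_one
  intro n
  rw [← map_natCast (algebraMap ℚ_[p] K) n, norm_algebraMap']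
  exact_mod_cast Padic.norm_int_le_one (n : ℤ)

lemma aux_norm_eK (p : ℕ) [Fact p.Prime] (K : Type*) [NontriviallyNormedField K]
    [NormedAlgebra ℚ_[p] K] (z : ℤ_[p]) : ‖eK p K z‖ = ‖z‖ := by
  rw [eK, RingHom.comp_apply, norm_algebraMap']
  exact (PadicInt.padic_norm_e_of_padicInt z)

lemma aux_dp_prod {p : ℕ} [Fact p.Prime] (n : ℕ) (x : ℤ_[p]) :
    (descPochhammer ℤ n).smeval x = ∏ i ∈ Finset.range n, (x - (i : ℤ_[p])) := by
  induction n with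
  | zero => simp [descPochhammer_zero, Polynomial.smeval_one]
  | succ n ih =>
      rw [descPochhammer_succ_right, Polynomial.smeval_mul, ih, Finset.prod_range_succ]
      congr 1
      simp [Polynomial.smeval_sub, Polynomial.smeval_X, Polynomial.smeval_natCast]

lemma aux_prod_eq_fact_mul_choose {p : ℕ} [Fact p.Prime] (n : ℕ) (x : ℤ_[p]) :
    ∏ i ∈ Finset.range n, (x - (i : ℤ_[p])) = (n.factorial : ℤ_[p]) * Ring.choose x n := by
  rw [← aux_dp_prod, Ring.descPochhammer_eq_factorial_smul_choose, nsmul_eq_mul]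

lemma aux_bK_eq (p : ℕ) [Fact p.Prime] (K : Type*) [NontriviallyNormedField K]
    [NormedAlgebra ℚ_[p] K] (n : ℕ) (x : ℤ_[p]) :
    bK p K n x = eK p K (Ring.choose x n) := by
  have hK : CharZero K := charZero_of_injective_algebraMap (algebraMap ℚ_[p] K).injective
  have hfac : ((n.factorial : K)) ≠ 0 := Nat.cast_ne_zero.mpr n.factorial_ne_zero
  have h1 : ∏ i ∈ Finset.range n, (pc p K x - (i : K))
      = eK p K (∏ i ∈ Finset.range n, (x - (i : ℤ_[p]))) := by
    rw [map_prod]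
    exact Finset.prod_congr rfl fun i _ => by rw [map_sub, map_natCast]; rfl
  rw [bK, h1, aux_prod_eq_fact_mul_choose, map_mul, map_natCast]
  field_simp

lemma aux_norm_bK_le_one (p : ℕ) [Fact p.Prime] (K : Type*) [NontriviallyNormedField K]
    [NormedAlgebra ℚ_[p] K] (n : ℕ) (x : ℤ_[p]) : ‖bK p K n x‖ ≤ 1 := by
  rw [aux_bK_eq, aux_norm_eK]
  exact PadicInt.norm_le_one _

lemma aux_inv_norm_nat {p : ℕ} [Fact p.Prime] (j : ℕ) (hj : j ≠ 0) :
    (1:ℝ) ≤ j * ‖(j : ℤ_[p])‖ := by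
  have hj0 : (j : ℚ_[p]) ≠ 0 := Nat.cast_ne_zero.mpr hj
  have h1 : ‖(j : ℤ_[p])‖ = ‖(j : ℚ_[p])‖ := by
    rw [PadicInt.norm_def, PadicInt.coe_natCast]
  rw [h1, Padic.norm_eq_zpow_neg_valuation hj0, Padic.valuation_natCast]
  have hdvd : p ^ padicValNat p j ≤ j := Nat.le_of_dvd (Nat.pos_of_ne_zero hj) pow_padicValNat_dvd
  have hp1 : (1:ℝ) ≤ (p:ℝ) := by exact_mod_cast (Fact.out : p.Prime).one_lt.le
  have : ((p:ℝ) ^ (-(padicValNat p j : ℤ))) = ((p:ℝ) ^ (padicValNat p j : ℕ))⁻¹ := by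
    rw [zpow_neg, zpow_natCast]
  rw [this, ← div_eq_mul_inv, le_div_iff₀ (by positivity)]
  calc (1:ℝ) * (p:ℝ) ^ (padicValNat p j : ℕ) = ((p ^ padicValNat p j : ℕ) : ℝ) := by push_cast; ring
  _ ≤ (j : ℝ) := by exact_mod_cast hdvd

lemma aux_norm_choose_le {p : ℕ} [Fact p.Prime] (j : ℕ) (hj : j ≠ 0) (z : ℤ_[p]) :
    ‖(Ring.choose z j : ℤ_[p])‖ ≤ j * ‖z‖ := by
  obtain ⟨m, rfl⟩ := Nat.exists_eq_succ_of_ne_zero hj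
  have key : ((m+1).factorial : ℤ_[p]) * Ring.choose z (m+1)
      = z * ((m.factorial : ℤ_[p]) * Ring.choose (z-1) m) := by
    rw [← aux_prod_eq_fact_mul_choose, ← aux_prod_eq_fact_mul_choose,
      Finset.prod_range_succ']
    simp only [Nat.cast_zero, sub_zero, Nat.cast_add, Nat.cast_one]
    rw [mul_comm]
    congr 1
    exact Finset.prod_congr rfl fun i _ => by push_cast; ring
  have hnorm := congrArg (fun t : ℤ_[p] => ‖t‖) key
  simp only [norm_mul] at hnorm
  have hfm : ‖((m.factorial : ℤ_[p]))‖ ≠ 0 := by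
    simp only [ne_eq, norm_eq_zero]
    exact Nat.cast_ne_zero.mpr m.factorial_ne_zero
  have hfact : ((m+1).factorial : ℤ_[p]) = ((m+1 : ℕ) : ℤ_[p]) * (m.factorial : ℤ_[p]) := by
    push_cast [Nat.factorial_succ]; ring
  rw [hfact, norm_mul] at hnorm
  -- hnorm : ‖m+1‖ * ‖m!‖ * ‖choose z (m+1)‖ = ‖z‖ * (‖m!‖ * ‖choose (z-1) m‖)
  have h2 : ‖((m+1 : ℕ) : ℤ_[p])‖ * ‖(Ring.choose z (m+1) : ℤ_[p])‖
      = ‖z‖ * ‖(Ring.choose (z-1) m : ℤ_[p])‖ := by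
    apply mul_right_cancel₀ hfm
    calc ‖((m+1 : ℕ) : ℤ_[p])‖ * ‖(Ring.choose z (m+1) : ℤ_[p])‖ * ‖((m.factorial : ℤ_[p]))‖
        = ‖((m+1 : ℕ) : ℤ_[p])‖ * ‖((m.factorial : ℤ_[p]))‖ * ‖(Ring.choose z (m+1) : ℤ_[p])‖ := by ring
      _ = ‖z‖ * (‖((m.factorial : ℤ_[p]))‖ * ‖(Ring.choose (z-1) m : ℤ_[p])‖) := hnorm
      _ = ‖z‖ * ‖(Ring.choose (z-1) m : ℤ_[p])‖ * ‖((m.factorial : ℤ_[p]))‖ := by ring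
  have h3 : ‖((m+1 : ℕ) : ℤ_[p])‖ * ‖(Ring.choose z (m+1) : ℤ_[p])‖ ≤ ‖z‖ :=
    h2.le.trans (by
      have := PadicInt.norm_le_one (Ring.choose (z-1) m)
      nlinarith [norm_nonneg z])
  have h4 := aux_inv_norm_nat (p := p) (m+1) (Nat.succ_ne_zero m)
  have hnn : (0:ℝ) ≤ ‖(Ring.choose z (m+1) : ℤ_[p])‖ := norm_nonneg _
  simp only [Nat.succ_eq_add_one]
  push_cast at h3 h4 ⊢
  nlinarith [mul_le_mul_of_nonneg_left h3 (by positivity : (0:ℝ) ≤ (m:ℝ)+1),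
    mul_le_mul_of_nonneg_right h4 hnn]

lemma aux_choose_sub {p : ℕ} [Fact p.Prime] (n : ℕ) (x y : ℤ_[p]) :
    ‖(Ring.choose x n - Ring.choose y n : ℤ_[p])‖ ≤ n * ‖x - y‖ := by
  have hx : Ring.choose x n
      = ∑ ij ∈ Finset.HasAntidiagonal.antidiagonal n, Ring.choose (x - y) ij.1 * Ring.choose y ij.2 := by
    have := Ring.add_choose_eq (r := x - y) (s := y) n (Commute.all _ _)
    rwa [sub_add_cancel] at this
  have h0n : ((0 : ℕ), n) ∈ Finset.HasAntidiagonal.antidiagonal n := Finset.HasAntidiagonal.mem_antidiagonal.mpr (zero_add n)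
  have hsum : Ring.choose x n - Ring.choose y n
      = ∑ ij ∈ (Finset.HasAntidiagonal.antidiagonal n).erase ((0 : ℕ), n),
          Ring.choose (x - y) ij.1 * Ring.choose y ij.2 := by
    rw [hx, ← Finset.add_sum_erase _ _ h0n, Ring.choose_zero_right, one_mul]
    ring
  rw [hsum]
  apply IsUltrametricDist.norm_sum_le_of_forall_le_of_nonneg (by positivity)
  intro ij hij
  obtain ⟨hne, hmem⟩ := Finset.mem_erase.mp hij
  have hsumij : ij.1 + ij.2 = n := Finset.HasAntidiagonal.mem_antidiagonal.mp hmem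
  have h1 : ij.1 ≠ 0 := by
    intro h0
    apply hne
    have : ij.2 = n := by omega
    exact Prod.ext h0 this
  calc ‖(Ring.choose (x - y) ij.1 * Ring.choose y ij.2 : ℤ_[p])‖
      = ‖(Ring.choose (x - y) ij.1 : ℤ_[p])‖ * ‖(Ring.choose y ij.2 : ℤ_[p])‖ :=
        norm_mul _ _
    _ ≤ (ij.1 * ‖x - y‖) * 1 := by
        apply mul_le_mul (aux_norm_choose_le ij.1 h1 _) (PadicInt.norm_le_one _)
          (norm_nonneg _) (by positivity)
    _ ≤ n * ‖x - y‖ := by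
        rw [mul_one]
        have : (ij.1 : ℝ) ≤ n := by exact_mod_cast Nat.le.intro hsumij
        nlinarith [norm_nonneg (x - y)]

lemma aux_bK_sub (p : ℕ) [Fact p.Prime] (K : Type*) [NontriviallyNormedField K]
    [NormedAlgebra ℚ_[p] K] (n : ℕ) (x y : ℤ_[p]) :
    ‖bK p K n x - bK p K n y‖ ≤ n * ‖x - y‖ := by
  rw [aux_bK_eq, aux_bK_eq, ← map_sub, aux_norm_eK]
  exact aux_choose_sub n x y

lemma aux_cube : ∀ n : ℕ, n ^ 3 ≤ 3 ^ n := by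
  have step : ∀ n : ℕ, 3 ≤ n → n ^ 3 ≤ 3 ^ n → (n + 1) ^ 3 ≤ 3 ^ (n + 1) := by
    intro n hn ih
    have : (n + 1) ^ 3 ≤ 3 * n ^ 3 := by
      zify
      have hz : (3:ℤ) ≤ (n:ℤ) := by exact_mod_cast hn
      nlinarith [mul_le_mul_of_nonneg_right hz (mul_self_nonneg (n:ℤ)),
        mul_le_mul_of_nonneg_right hz (by positivity : (0:ℤ) ≤ (n:ℤ)), mul_self_nonneg ((n:ℤ)-3)]
    calc (n + 1) ^ 3 ≤ 3 * n ^ 3 := this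
      _ ≤ 3 * 3 ^ n := by omega
      _ = 3 ^ (n + 1) := by ring
  intro n
  rcases lt_or_ge n 3 with h | h
  · interval_cases n <;> norm_num
  · induction n, h using Nat.le_induction with
    | base => norm_num
    | succ n hn ih => exact step n hn ih

lemma aux_real (n : ℕ) : (n : ℝ) * (((1 : ℝ) / 3) ^ ((1 : ℝ) / 3)) ^ n ≤ 1 := by
  set c : ℝ := ((1 : ℝ) / 3) ^ ((1 : ℝ) / 3) with hc
  have hc0 : 0 ≤ c := Real.rpow_nonneg (by norm_num) _
  have hc3 : c ^ (3 : ℕ) = 1 / 3 := by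
    rw [hc, ← Real.rpow_natCast (((1 : ℝ) / 3) ^ ((1 : ℝ) / 3)) 3, ← Real.rpow_mul (by norm_num)]
    norm_num
  have ha : 0 ≤ (n : ℝ) * c ^ n := by positivity
  have hcube : ((n : ℝ) * c ^ n) ^ (3 : ℕ) ≤ 1 := by
    have : ((n : ℝ) * c ^ n) ^ (3 : ℕ) = (n : ℝ) ^ (3 : ℕ) * (c ^ (3 : ℕ)) ^ n := by
      rw [mul_pow, ← pow_mul, ← pow_mul, Nat.mul_comm]
    rw [this, hc3]
    have h1 : ((n : ℝ) ^ (3:ℕ)) ≤ (3 : ℝ) ^ n := by exact_mod_cast aux_cube n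
    have h30 : (0:ℝ) < (3:ℝ) ^ n := by positivity
    have h13 : ((1:ℝ)/3) ^ n = ((3:ℝ) ^ n)⁻¹ := by rw [one_div, inv_pow]
    rw [h13, ← div_eq_mul_inv, div_le_one h30]
    exact h1
  calc (n : ℝ) * c ^ n = (((n : ℝ) * c ^ n) ^ (3:ℕ)) ^ ((1:ℝ)/3) := by
        rw [← Real.rpow_natCast ((n : ℝ) * c ^ n) 3, ← Real.rpow_mul ha]
        norm_num
    _ ≤ 1 := by
        apply Real.rpow_le_one (by positivity) hcube (by norm_num)

lemma aux_q_lt_one : ((1:ℝ)/3) ^ ((1:ℝ)/3) < 1 :=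
  Real.rpow_lt_one (by norm_num) (by norm_num) (by norm_num)

lemma aux_summable (p : ℕ) [Fact p.Prime] (K : Type*) [NontriviallyNormedField K]
    [NormedAlgebra ℚ_[p] K] [CompleteSpace K] (r : K) (hr : ‖r - 1‖ < 1) (x : ℤ_[p]) :
    Summable (fun n : ℕ => (r - 1) ^ n * bK p K n x) := by
  apply Summable.of_norm_bounded
    (summable_geometric_of_lt_one (norm_nonneg _) hr)
  intro n
  rw [norm_mul, norm_pow]
  exact mul_le_of_le_one_right (by positivity) (aux_norm_bK_le_one p K n x)

lemma aux_g_norm_le (p : ℕ) [Fact p.Prime] (K : Type*) [NontriviallyNormedField K]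
    [NormedAlgebra ℚ_[p] K] (r : K) (hr : ‖r - 1‖ ≤ 1) (x : ℤ_[p]) :
    ‖∑' n : ℕ, (r - 1) ^ n * bK p K n x‖ ≤ 1 := by
  have := aux_ultraK p K
  apply IsUltrametricDist.norm_tsum_le_of_forall_le_of_nonneg zero_le_one
  intro n
  rw [norm_mul, norm_pow]
  exact mul_le_one₀ (pow_le_one₀ (norm_nonneg _) hr) (norm_nonneg _) (aux_norm_bK_le_one p K n x)

lemma aux_bK_zero (p : ℕ) [Fact p.Prime] (K : Type*) [NontriviallyNormedField K]
    [NormedAlgebra ℚ_[p] K] (x : ℤ_[p]) : bK p K 0 x = 1 := by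
  simp [bK]

lemma aux_g_lip (p : ℕ) [Fact p.Prime] (K : Type*) [NontriviallyNormedField K]
    [NormedAlgebra ℚ_[p] K] [CompleteSpace K] (r : K)
    (hr : ‖r - 1‖ ≤ ((1 : ℝ) / 3) ^ ((1 : ℝ) / 3)) :
    LipschitzWith 1 (fun x : ℤ_[p] => ∑' n : ℕ, (r - 1) ^ n * bK p K n x) := by
  have hq1 : ‖r - 1‖ < 1 := lt_of_le_of_lt hr aux_q_lt_one
  have := aux_ultraK p K
  apply LipschitzWith.of_dist_le_mul
  intro x y
  simp only [NNReal.coe_one, one_mul, dist_eq_norm]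
  have hsub : (∑' n : ℕ, (r - 1) ^ n * bK p K n x) - (∑' n : ℕ, (r - 1) ^ n * bK p K n y)
      = ∑' n : ℕ, (r - 1) ^ n * (bK p K n x - bK p K n y) := by
    rw [← Summable.tsum_sub (aux_summable p K r hq1 x) (aux_summable p K r hq1 y)]
    congr 1
    funext n
    ring
  rw [hsub]
  apply IsUltrametricDist.norm_tsum_le_of_forall_le_of_nonneg (norm_nonneg _)
  intro n
  rw [norm_mul, norm_pow]
  rcases n with _ | m
  · rw [aux_bK_zero, aux_bK_zero, sub_self, norm_zero, mul_zero]
    exact norm_nonneg _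
  · have hb := aux_bK_sub p K (m+1) x y
    have hq : ‖r - 1‖ ^ (m+1) ≤ (((1 : ℝ)/3) ^ ((1:ℝ)/3)) ^ (m+1) :=
      pow_le_pow_left₀ (norm_nonneg _) hr (m+1)
    have hreal := aux_real (m+1)
    have hd : (0:ℝ) ≤ ‖x - y‖ := norm_nonneg _
    calc ‖r - 1‖ ^ (m+1) * ‖bK p K (m+1) x - bK p K (m+1) y‖
        ≤ (((1 : ℝ)/3) ^ ((1:ℝ)/3)) ^ (m+1) * (((m:ℝ)+1) * ‖x - y‖) := by
          apply mul_le_mul hq ?_ (norm_nonneg _) (by positivity)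
          exact_mod_cast hb
      _ = (((m:ℝ)+1) * (((1 : ℝ)/3) ^ ((1:ℝ)/3)) ^ (m+1)) * ‖x - y‖ := by ring
      _ ≤ 1 * ‖x - y‖ := by
          apply mul_le_mul_of_nonneg_right ?_ hd
          exact_mod_cast hreal
      _ = ‖x - y‖ := one_mul _

lemma aux_fact_dvd {p : ℕ} [Fact p.Prime] : ∀ k : ℕ, p ^ k ∣ Nat.factorial (k * p) := by
  intro k
  induction k with
  | zero => simp
  | succ k ih =>
      have hp1 : 0 < p := (Fact.out : p.Prime).pos
      have hpos : 0 < (k+1) * p := Nat.mul_pos k.succ_pos hp1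
      have h1 : (k+1) * p = ((k+1) * p - 1) + 1 := by omega
      have hle : k * p ≤ (k+1) * p - 1 := by
        have : (k+1) * p = k * p + p := by ring
        omega
      have hdvd1 : p ∣ (k+1) * p := dvd_mul_left p (k+1)
      have hdvd2 : p ^ k ∣ ((k+1) * p - 1).factorial :=
        dvd_trans ih (Nat.factorial_dvd_factorial hle)
      have : ((k+1) * p).factorial = ((k+1) * p) * ((k+1) * p - 1).factorial := by
        rw [h1, Nat.factorial_succ, ← h1]
      rw [this, pow_succ, mul_comm ((k+1) * p) _]
      exact mul_dvd_mul hdvd2 hdvd1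

lemma aux_fact_norm {p : ℕ} [Fact p.Prime] (k : ℕ) :
    ‖((Nat.factorial (k * p) : ℤ_[p]))‖ ≤ ((p:ℝ) ^ k)⁻¹ := by
  obtain ⟨c, hc⟩ := aux_fact_dvd (p := p) k
  rw [hc]
  push_cast
  rw [norm_mul]
  have h1 : ‖(p : ℤ_[p]) ^ k‖ = ((p:ℝ) ^ k)⁻¹ := by
    rw [PadicInt.norm_p_pow, zpow_neg, zpow_natCast]
  calc ‖(p : ℤ_[p]) ^ k‖ * ‖(c : ℤ_[p])‖ ≤ ‖(p : ℤ_[p]) ^ k‖ * 1 :=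
        mul_le_mul_of_nonneg_left (PadicInt.norm_le_one _) (norm_nonneg _)
    _ = ((p:ℝ) ^ k)⁻¹ := by rw [mul_one, h1]

lemma aux_pc_eq (p : ℕ) [Fact p.Prime] (K : Type*) [NontriviallyNormedField K]
    [NormedAlgebra ℚ_[p] K] (x : ℤ_[p]) : pc p K x = eK p K x := rfl

lemma aux_S_bound (p : ℕ) [Fact p.Prime] (K : Type*) [NontriviallyNormedField K]
    [NormedAlgebra ℚ_[p] K] (f : ℤ_[p] → K) (M C : ℝ) (hC : 0 ≤ C)
    (hM : ∀ x, ‖f x‖ ≤ M) (hS : ∀ x, ‖f x - pc p K x * f (x - 1)‖ ≤ C) :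
    ∀ x, ‖f x‖ ≤ C := by
  have hu := aux_ultraK p K
  have hM0 : 0 ≤ M := (norm_nonneg _).trans (hM 0)
  have main : ∀ n : ℕ, ∀ x : ℤ_[p],
      ‖f x‖ ≤ max C (‖(∏ i ∈ Finset.range n, (x - (i : ℤ_[p])) : ℤ_[p])‖ * M) := by
    intro n
    induction n with
    | zero =>
        intro x
        simpa using le_max_of_le_right (hM x)
    | succ n ih =>
        intro x
        have hx1 : ‖x‖ ≤ 1 := PadicInt.norm_le_one x
        have hde : f x = (f x - pc p K x * f (x - 1)) + pc p K x * f (x - 1) := by ring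
        have hnormpc : ‖pc p K x * f (x - 1)‖ = ‖x‖ * ‖f (x - 1)‖ := by
          rw [norm_mul, aux_pc_eq, aux_norm_eK]
        have h1 : ‖f x‖ ≤ max C (‖x‖ * ‖f (x - 1)‖) := by
          rw [hde, ← hnormpc]
          exact (IsUltrametricDist.norm_add_le_max _ _).trans (max_le_max (hS x) le_rfl)
        have hprod : (∏ i ∈ Finset.range (n+1), (x - (i : ℤ_[p])))
            = x * ∏ i ∈ Finset.range n, ((x - 1) - (i : ℤ_[p])) := by
          rw [Finset.prod_range_succ', Nat.cast_zero, sub_zero, mul_comm]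
          congr 1
          exact Finset.prod_congr rfl fun i _ => by push_cast; ring
        have h2 : ‖x‖ * ‖f (x - 1)‖ ≤ max C
            (‖(∏ i ∈ Finset.range (n+1), (x - (i : ℤ_[p])) : ℤ_[p])‖ * M) := by
          calc ‖x‖ * ‖f (x - 1)‖
              ≤ ‖x‖ * max C (‖(∏ i ∈ Finset.range n, ((x-1) - (i : ℤ_[p])) : ℤ_[p])‖ * M) :=
                mul_le_mul_of_nonneg_left (ih (x - 1)) (norm_nonneg _)
            _ = max (‖x‖ * C)
                (‖x‖ * (‖(∏ i ∈ Finset.range n, ((x-1) - (i : ℤ_[p])) : ℤ_[p])‖ * M)) :=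
                mul_max_of_nonneg _ _ (norm_nonneg _)
            _ ≤ max C (‖(∏ i ∈ Finset.range (n+1), (x - (i : ℤ_[p])) : ℤ_[p])‖ * M) := by
                apply max_le_max (mul_le_of_le_one_left hC hx1)
                rw [hprod, norm_mul]
                exact le_of_eq (by ring)
        exact h1.trans (max_le (le_max_left _ _) h2)
  intro x
  refine le_of_forall_pos_le_add (fun ε hε => ?_)
  have hp1 : (1:ℝ) < p := by exact_mod_cast (Fact.out : p.Prime).one_lt
  obtain ⟨k, hk⟩ := pow_unbounded_of_one_lt (M / ε) hp1
  have hpk : (0:ℝ) < (p:ℝ) ^ k := by positivity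
  have hMε : ((p:ℝ) ^ k)⁻¹ * M < ε := by
    rw [div_lt_iff₀ hε] at hk
    rw [inv_mul_lt_iff₀ hpk]
    nlinarith
  have hPn : ‖(∏ i ∈ Finset.range (k * p), (x - (i : ℤ_[p])) : ℤ_[p])‖ ≤ ((p:ℝ) ^ k)⁻¹ := by
    rw [aux_prod_eq_fact_mul_choose, norm_mul]
    calc ‖((k * p).factorial : ℤ_[p])‖ * ‖(Ring.choose x (k * p) : ℤ_[p])‖
        ≤ ‖((k * p).factorial : ℤ_[p])‖ * 1 :=
          mul_le_mul_of_nonneg_left (PadicInt.norm_le_one _) (norm_nonneg _)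
      _ ≤ ((p:ℝ) ^ k)⁻¹ := by rw [mul_one]; exact aux_fact_norm k
  have := main (k * p) x
  have hfin : ‖(∏ i ∈ Finset.range (k * p), (x - (i : ℤ_[p])) : ℤ_[p])‖ * M ≤ ε :=
    le_of_lt (lt_of_le_of_lt (mul_le_mul_of_nonneg_right hPn hM0) hMε)
  calc ‖f x‖ ≤ max C (‖(∏ i ∈ Finset.range (k * p), (x - (i : ℤ_[p])) : ℤ_[p])‖ * M) := this
    _ ≤ C + ε := max_le (by linarith) (by linarith)

/-- If `r ∈ K` with `‖r - 1‖ ≤ (1/3)^{1/3}`, then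
`g_r : x ↦ r^x = Σₙ (r-1)ⁿ C(x,n)` is `1`-Lipschitz; in particular so is
`f_r = S⁻¹ g_r`. -/
theorem stmt_12 (p : ℕ) [Fact p.Prime] (K : Type*) [NontriviallyNormedField K]
    [NormedAlgebra ℚ_[p] K] [CompleteSpace K]
    (r : K) (hr : ‖r - 1‖ ≤ ((1 : ℝ) / 3) ^ ((1 : ℝ) / 3)) :
    LipschitzWith 1 (fun x : ℤ_[p] => ∑' n : ℕ, (r - 1) ^ n * bK p K n x) ∧
    (∀ f : ℤ_[p] → K, Continuous f →
      Sop p K f = (fun x : ℤ_[p] => ∑' n : ℕ, (r - 1) ^ n * bK p K n x) →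
      LipschitzWith 1 f) := by
  have hult := aux_ultraK p K
  have hglip := aux_g_lip p K r hr
  refine ⟨hglip, ?_⟩
  intro f hf hSf
  have hq1le : ‖r - 1‖ ≤ 1 := hr.trans aux_q_lt_one.le
  have hSf' : ∀ x : ℤ_[p], f x - pc p K x * f (x - 1)
      = ∑' n : ℕ, (r - 1) ^ n * bK p K n x := fun x => congrFun hSf x
  obtain ⟨M, hM⟩ : ∃ M, ∀ x, ‖f x‖ ≤ M := by
    obtain ⟨M, hM⟩ := isCompact_univ.exists_bound_of_continuousOn hf.continuousOn
    exact ⟨M, fun x => hM x (Set.mem_univ x)⟩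
  have hf1 : ∀ x, ‖f x‖ ≤ 1 :=
    aux_S_bound p K f M 1 zero_le_one hM
      (fun x => by rw [hSf' x]; exact aux_g_norm_le p K r hq1le x)
  apply LipschitzWith.of_dist_le_mul
  intro x y
  simp only [NNReal.coe_one, one_mul, dist_eq_norm]
  set t := x - y with ht
  set u := fun z : ℤ_[p] => f (z + t) - f z with hu
  have hub : ∀ z, ‖u z‖ ≤ 2 := fun z =>
    (norm_sub_le _ _).trans (by linarith [hf1 (z + t), hf1 z])
  have hSu : ∀ z, ‖u z - pc p K z * u (z - 1)‖ ≤ ‖t‖ := by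
    intro z
    have harg : z - 1 + t = z + t - 1 := by ring
    have e1 : u z - pc p K z * u (z - 1)
        = ((f (z + t) - pc p K (z + t) * f (z + t - 1)) - (f z - pc p K z * f (z - 1)))
          + (pc p K (z + t) - pc p K z) * f (z + t - 1) := by
      simp only [hu, harg]
      ring
    rw [e1, hSf' (z + t), hSf' z]
    have hpc : pc p K (z + t) - pc p K z = eK p K t := by
      rw [aux_pc_eq, aux_pc_eq, ← map_sub]
      congr 1
      ring
    rw [hpc]
    refine (IsUltrametricDist.norm_add_le_max _ _).trans (max_le ?_ ?_)
    · have hd := hglip.dist_le_mul (z + t) z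
      simp only [NNReal.coe_one, one_mul, dist_eq_norm] at hd
      simpa [add_sub_cancel_left] using hd
    · rw [norm_mul, aux_norm_eK]
      exact mul_le_of_le_one_right (norm_nonneg _) (hf1 _)
  have hfin := aux_S_bound p K u 2 ‖t‖ (norm_nonneg _) hub hSu y
  have hyt : y + t = x := by rw [ht]; ring
  simpa [hu, hyt] using hfin
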